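/- Fibers of the Hopf map are circles: for unit quaternions p and q, one has q * i * q⁻¹ = p * i * p⁻¹ if and only if there exists a real number t with q = p * (cos t + (sin t) • i). That is, two unit quaternions have the same image under the Hopf fibration S³ → S² given by q ↦ q i q⁻¹ exactly when they differ by right multiplication by an element of the circle subgroup {cos t + sin t · i}. -/

import Mathlib

/-- The quaternion `i`. -/
def quatI : Quaternion ℝ := ⟨0, 1, 0, 0⟩

@[simp] lemma quatI_re : quatI.re = 0 := rfl
@[simp] lemma quatI_imI : quatI.imI = 1 := rfl
@[simp] lemma quatI_imJ : quatI.imJ = 0 := rfl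
@[simp] lemma quatI_imK : quatI.imK = 0 := rfl

lemma circ_elem (c s : ℝ) (hcs : c^2 + s^2 = 1) :
    ((c : Quaternion ℝ) + s • quatI) * ((c : Quaternion ℝ) - s • quatI) = 1 := by
  ext <;> simp [quatI_re, quatI_imI, quatI_imJ, quatI_imK, Quaternion.ext_iff, Quaternion.re_one, Quaternion.imI_one, Quaternion.imJ_one, Quaternion.imK_one] <;> ring_nf <;> nlinarith [hcs]

lemma comm_i (c s : ℝ) :
    ((c : Quaternion ℝ) + s • quatI) * quatI = quatI * ((c : Quaternion ℝ) + s • quatI) := by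
  ext <;> simp [quatI_re, quatI_imI, quatI_imJ, quatI_imK] <;> ring

/-- Fibers of the Hopf map are circles: two unit quaternions `p` and `q` satisfy
`q * i * q⁻¹ = p * i * p⁻¹` exactly when `q = p * (cos t + sin t • i)` for some real `t`. -/
theorem hopf_fiber_circle (p q : Quaternion ℝ) (hp : ‖p‖ = 1) (hq : ‖q‖ = 1) :
    q * quatI * q⁻¹ = p * quatI * p⁻¹ ↔
      ∃ t : ℝ, q = p * (((Real.cos t : ℝ) : Quaternion ℝ) + Real.sin t • quatI) := by
  have hp0 : p ≠ 0 := by intro h; simp [h] at hp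
  have hq0 : q ≠ 0 := by intro h; simp [h] at hq
  constructor
  · intro h
    set r := p⁻¹ * q with hr
    have hcomm : r * quatI = quatI * r := by
      have h2 := congrArg (fun x => p⁻¹ * x * q) h
      simp only [mul_assoc] at h2
      rw [inv_mul_cancel₀ hq0, mul_one] at h2
      show p⁻¹ * q * quatI = quatI * (p⁻¹ * q)
      rw [mul_assoc, h2, ← mul_assoc p⁻¹ p, inv_mul_cancel₀ hp0, one_mul]
    have hrJK : r.imJ = 0 ∧ r.imK = 0 := by
      have := Quaternion.ext_iff.mp hcomm
      simp [quatI_re, quatI_imI, quatI_imJ, quatI_imK] at this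
      constructor <;> linarith [this.1, this.2]
    have hnr : ‖r‖ = 1 := by
      rw [hr, norm_mul, norm_inv, hp, hq]; norm_num
    have hsq : r.re ^ 2 + r.imI ^ 2 = 1 := by
      have h2 : Quaternion.normSq r = 1 := by
        have := congrArg (fun x => x ^ 2) hnr
        simp only [one_pow] at this
        rw [sq, ← Quaternion.normSq_eq_norm_mul_self] at this
        exact this
      rw [Quaternion.normSq_def'] at h2
      rw [hrJK.1, hrJK.2] at h2
      nlinarith [h2]
    set z : ℂ := ⟨r.re, r.imI⟩ with hz
    have hzabs : ‖z‖ = 1 := by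
      simp [Complex.norm_def, Complex.normSq, hz]
      nlinarith [hsq]
    have hz0 : z ≠ 0 := by
      intro h; rw [h] at hzabs; simp at hzabs
    refine ⟨Complex.arg z, ?_⟩
    have hc : Real.cos (Complex.arg z) = r.re := by
      rw [Complex.cos_arg hz0, hzabs]; simp [hz]
    have hs : Real.sin (Complex.arg z) = r.imI := by
      rw [Complex.sin_arg, hzabs]; simp [hz]
    have hreq : r = ((Real.cos (Complex.arg z) : ℝ) : Quaternion ℝ) + Real.sin (Complex.arg z) • quatI := by
      ext <;> simp [quatI_re, quatI_imI, quatI_imJ, quatI_imK, hc, hs, hrJK.1, hrJK.2]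
    rw [← hreq, hr, ← mul_assoc, mul_inv_cancel₀ hp0, one_mul]
  · rintro ⟨t, rfl⟩
    have hcs : Real.cos t ^ 2 + Real.sin t ^ 2 = 1 := Real.cos_sq_add_sin_sq t
    set u := ((Real.cos t : ℝ) : Quaternion ℝ) + Real.sin t • quatI with hu
    have hui : u * ((Real.cos t : ℝ) : Quaternion ℝ) - u * (Real.sin t • quatI) = 1 := by
      have := circ_elem (Real.cos t) (Real.sin t) hcs
      rw [mul_sub] at this; exact this
    have huinv : u * (((Real.cos t : ℝ) : Quaternion ℝ) - Real.sin t • quatI) = 1 :=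
      circ_elem _ _ hcs
    have hu0 : u ≠ 0 := by
      intro h; rw [h, zero_mul] at huinv; exact one_ne_zero huinv.symm
    have huinv' : u⁻¹ = ((Real.cos t : ℝ) : Quaternion ℝ) - Real.sin t • quatI := by
      exact inv_eq_of_mul_eq_one_right huinv
    rw [mul_inv_rev]
    calc p * u * quatI * (u⁻¹ * p⁻¹)
        = p * (u * quatI * u⁻¹) * p⁻¹ := by simp only [mul_assoc]
      _ = p * quatI * p⁻¹ := by
          rw [comm_i, ← hu, mul_assoc quatI u, mul_inv_cancel₀ hu0, mul_one]
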